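/- arXiv:2404.04731 — 5 statements merged into one kernel-verified Lean document; each statement's English description precedes it below -/
import Mathlib

section
/- Let n be a natural number and x : Fin n → Bool an assignment to propositional variables x_1,…,x_n. Then there exists an assignment s : Fin (n+1) → Bool to the auxiliary variables s_0,…,s_n such that s_0 = false and, for every i with 1 ≤ i ≤ n, the three clauses (¬s_{i−1} ∨ s_i), (¬s_{i−1} ∨ ¬x_i), and (s_{i−1} ∨ ¬x_i ∨ s_i) are all satisfied, if and only if at most one of x_1,…,x_n is true, i.e. the cardinality of {i : x_i = true} is at most 1. -/
/-- The sequential at-most-one (AMO) encoding is correct: for an assignment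
`x` to the variables `x_1, …, x_n`, there exists an assignment `s` to the
auxiliary variables `s_0, …, s_n` with `s_0 = false` satisfying, for each
`1 ≤ i ≤ n`, the clauses `(¬s_{i-1} ∨ s_i)`, `(¬s_{i-1} ∨ ¬x_i)` and
`(s_{i-1} ∨ ¬x_i ∨ s_i)`, if and only if at most one of the `x_i` is true. -/
theorem amo_encoding_correct (n : ℕ) (x : Fin n → Bool) :
    (∃ s : Fin (n + 1) → Bool,
      s 0 = false ∧
      ∀ i : Fin n,
        ((!(s i.castSucc) || s i.succ) = true ∧
         (!(s i.castSucc) || !(x i)) = true ∧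
         (s i.castSucc || !(x i) || s i.succ) = true)) ↔
    (Finset.univ.filter fun i : Fin n => x i = true).card ≤ 1 := by
  constructor
  · rintro ⟨s, hs0, hcl⟩
    rw [Finset.card_le_one]
    simp only [Finset.mem_filter, Finset.mem_univ, true_and]
    -- key: no two distinct true variables
    have key : ∀ a b : Fin n, a < b → x a = true → x b = true → False := by
      intro a b hab hxa hxb
      obtain ⟨c1a, c2a, c3a⟩ := hcl a
      -- s a.castSucc = false
      have hsa : s a.castSucc = false := by
        cases h : s a.castSucc with
        | false => rfl
        | true => simp [h, hxa] at c2a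
      have hsucc : s a.succ = true := by
        simpa [hsa, hxa] using c3a
      have mono : ∀ m : ℕ, (a : ℕ) < m → ∀ hm : m ≤ n, s ⟨m, by omega⟩ = true := by
        intro m
        induction m with
        | zero => omega
        | succ k ih =>
          intro hk hm
          rcases Nat.lt_or_ge (a : ℕ) k with h | h
          · have hk' : k < n := by omega
            have := (hcl ⟨k, hk'⟩).1
            have hsk : s ⟨k, by omega⟩ = true := ih h (by omega)
            have hcs : (⟨k, hk'⟩ : Fin n).castSucc = ⟨k, by omega⟩ := rfl
            have hss : (⟨k, hk'⟩ : Fin n).succ = ⟨k+1, by omega⟩ := rfl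
            rw [hcs, hss, hsk] at this
            simpa using this
          · have hak : (a : ℕ) = k := by omega
            have : a.succ = (⟨k+1, by omega⟩ : Fin (n+1)) := by
              ext; simp [hak]
            rwa [this] at hsucc
      have hsb : s b.castSucc = true := by
        have := mono (b : ℕ) hab b.isLt.le
        have hbc : b.castSucc = ⟨(b : ℕ), by omega⟩ := rfl
        rwa [hbc]
      obtain ⟨c1b, c2b, c3b⟩ := hcl b
      simp [hsb, hxb] at c2b
    intro a ha b hb
    by_contra hne
    rcases lt_or_gt_of_ne hne with h | h
    · exact key a b h ha hb
    · exact key b a h hb ha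
  · intro h
    have h1 := Finset.card_le_one.mp h
    simp only [Finset.mem_filter, Finset.mem_univ, true_and] at h1
    refine ⟨fun k => decide (∃ i : Fin n, (i : ℕ) < (k : ℕ) ∧ x i = true), by simp, ?_⟩
    intro i
    refine ⟨?_, ?_, ?_⟩
    · simp only [Bool.or_eq_true, Bool.not_eq_true', decide_eq_false_iff_not,
        decide_eq_true_eq, Fin.coe_castSucc, Fin.val_succ]
      by_cases hc : ∃ j : Fin n, (j : ℕ) < (i : ℕ) ∧ x j = true
      · right; obtain ⟨j, hj, hxj⟩ := hc; exact ⟨j, by omega, hxj⟩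
      · left; exact hc
    · simp only [Bool.or_eq_true, Bool.not_eq_true', decide_eq_false_iff_not,
        Fin.coe_castSucc]
      by_cases hxi : x i = true
      · left
        rintro ⟨j, hj, hxj⟩
        have := h1 j hxj i hxi
        omega
      · right; simpa using hxi
    · cases hxi : x i with
      | false => simp
      | true =>
        simp only [Bool.or_eq_true, decide_eq_true_eq, Fin.val_succ]
        right; exact ⟨i, by omega, hxi⟩
end

section
/- Let n be a natural number and x : Fin n → Bool an assignment to propositional variables x_1,…,x_n. Then the following are equivalent: (a) some x_i is true AND there exists an assignment s : Fin (n+1) → Bool with s_0 = false such that for every i with 1 ≤ i ≤ n the three clauses (¬s_{i−1} ∨ s_i), (¬s_{i−1} ∨ ¬x_i), and (s_{i−1} ∨ ¬x_i ∨ s_i) are all satisfied; (b) exactly one of x_1,…,x_n is true, i.e. the cardinality of {i : x_i = true} equals 1. -/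
/-- The exactly-one (EO) encoding is correct: some `x_i` is true and the
sequential at-most-one encoding is satisfiable for `x`, if and only if
exactly one of the `x_i` is true. -/
theorem eo_encoding_correct (n : ℕ) (x : Fin n → Bool) :
    ((∃ i : Fin n, x i = true) ∧
      ∃ s : Fin (n + 1) → Bool,
        s 0 = false ∧
        ∀ i : Fin n,
          ((!(s i.castSucc) || s i.succ) = true ∧
           (!(s i.castSucc) || !(x i)) = true ∧
           (s i.castSucc || !(x i) || s i.succ) = true)) ↔
    (Finset.univ.filter fun i : Fin n => x i = true).card = 1 := by
  constructor
  · rintro ⟨⟨i0, hi0⟩, s, hs0, hcl⟩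
    -- s is monotone
    have mono : ∀ b : ℕ, (hb : b ≤ n) → ∀ a : ℕ, (ha : a ≤ b) →
        s ⟨a, by omega⟩ = true → s ⟨b, by omega⟩ = true := by
      intro b
      induction b with
      | zero =>
        intro hb a ha hs
        have : a = 0 := by omega
        subst this; exact hs
      | succ b ih =>
        intro hb a ha hs
        rcases Nat.eq_or_lt_of_le ha with h | h
        · subst h; exact hs
        · have hb' : b < n := by omega
          have hsb : s ⟨b, by omega⟩ = true := ih (by omega) a (by omega) hs
          have h1 := (hcl ⟨b, hb'⟩).1
          simp only [Fin.castSucc_mk, Fin.succ_mk, hsb, Bool.not_true,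
            Bool.false_or] at h1
          exact h1
    -- at most one true
    have key : ∀ i j : Fin n, i < j → x i = true → x j = true → False := by
      intro i j hij hxi hxj
      have h2i := (hcl i).2.1
      have h3i := (hcl i).2.2
      rw [hxi] at h2i h3i
      have hci : s i.castSucc = false := by
        cases h : s i.castSucc <;> simp [h] at h2i ⊢
      rw [hci] at h3i
      simp at h3i
      have hjc : s j.castSucc = true := by
        have : s ⟨j.val, by omega⟩ = true := by
          have := mono j.val (by omega) (i.val + 1) (by exact hij) (by
            have : (⟨i.val + 1, by omega⟩ : Fin (n+1)) = i.succ := rfl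
            rw [this]; exact h3i)
          exact this
        have : j.castSucc = ⟨j.val, by omega⟩ := rfl
        rw [this]; assumption
      have h2j := (hcl j).2.1
      rw [hxj, hjc] at h2j
      simp at h2j
    rw [Finset.card_eq_one]
    refine ⟨i0, ?_⟩
    ext j
    simp only [Finset.mem_filter, Finset.mem_univ, true_and, Finset.mem_singleton]
    constructor
    · intro hxj
      by_contra hne
      rcases lt_or_gt_of_ne hne with h | h
      · exact key j i0 h hxj hi0
      · exact key i0 j h hi0 hxj
    · rintro rfl; exact hi0
  · intro h
    rw [Finset.card_eq_one] at h
    obtain ⟨i0, h⟩ := h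
    have hi0 : x i0 = true := by
      have : i0 ∈ Finset.univ.filter fun i : Fin n => x i = true := by
        rw [h]; exact Finset.mem_singleton_self i0
      simpa using this
    have huniq : ∀ j : Fin n, x j = true → j = i0 := by
      intro j hj
      have : j ∈ Finset.univ.filter fun i : Fin n => x i = true := by simpa using hj
      rw [h] at this; simpa using this
    refine ⟨⟨i0, hi0⟩, fun k => decide (i0.val < k.val), by simp, ?_⟩
    intro i
    have hc : (fun k : Fin (n+1) => decide (i0.val < k.val)) i.castSucc
        = decide (i0.val < i.val) := by simp
    have hsc : (fun k : Fin (n+1) => decide (i0.val < k.val)) i.succ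
        = decide (i0.val < i.val + 1) := by simp
    cases hx : x i with
    | false =>
      refine ⟨?_, by simp [hc, hx], by simp [hx]⟩
      simp only [hc, hsc]
      by_cases hlt : i0.val < i.val
      · simp [hlt, Nat.lt_succ_of_lt hlt]
      · simp [hlt]
    | true =>
      have : i = i0 := huniq i hx
      subst this
      refine ⟨?_, ?_, ?_⟩ <;> simp [hc, hsc, hx]
end

section
/- Let N and N' be types, childT : N' → ℕ → Option N' the indexed child function of the target tree T, sel : N → ℕ → Option N the selected indexed edges in the source space, g : N' → N an injective map, and r : N' the root of T. Assume: (Φ_≅) for all n', i, n'_c, if childT n' i = some n'_c then sel (g n') i = some (g n'_c); (T is a tree) every m' ≠ r has a parent in T, and parents in T are unique, i.e. if childT p i = some m' and childT q j = some m' then p = q and i = j; (Φ_CN) every node has at most one parent under sel, i.e. if sel p i = some m and sel q j = some m then p = q and i = j; (Φ_RN) no selected edge points to g r, i.e. sel p i ≠ some (g r) for all p, i. Then the selected edges reflect the target edges: for all n', i, m', if sel (g n') i = some (g m') then childT n' i = some m'. -/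
/-- Under the hard constraints of the encoding, the selected edges in the
source space reflect the edges of the target tree: if the images under the
injective matching `g` of two target nodes are connected by a selected edge,
then the target nodes are connected by the corresponding edge of `T`. -/
theorem selected_edges_reflect {N N' : Type*}
    (childT : N' → ℕ → Option N') (sel : N → ℕ → Option N)
    (g : N' → N) (r : N')
    (hg : Function.Injective g)
    (hiso : ∀ (n' : N') (i : ℕ) (n'c : N'),
      childT n' i = some n'c → sel (g n') i = some (g n'c))
    (htree_parent : ∀ m' : N', m' ≠ r → ∃ (p : N') (i : ℕ), childT p i = some m')
    (htree_uniq : ∀ (p q : N') (i j : ℕ) (m' : N'),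
      childT p i = some m' → childT q j = some m' → p = q ∧ i = j)
    (hCN : ∀ (p q : N) (i j : ℕ) (m : N),
      sel p i = some m → sel q j = some m → p = q ∧ i = j)
    (hRN : ∀ (p : N) (i : ℕ), sel p i ≠ some (g r)) :
    ∀ (n' : N') (i : ℕ) (m' : N'),
      sel (g n') i = some (g m') → childT n' i = some m' := by
  intro n' i m' hsel
  have hm'r : m' ≠ r := by
    rintro rfl; exact hRN (g n') i hsel
  obtain ⟨p, j, hpj⟩ := htree_parent m' hm'r
  have hsel' := hiso p j m' hpj
  obtain ⟨hpq, hij⟩ := hCN (g p) (g n') j i (g m') hsel' hsel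
  rw [hg hpq, hij] at hpj
  exact hpj
end

section
/- Let N and N' be types, childT : N' → ℕ → Option N' the indexed child function of the target tree T, sel : N → ℕ → Option N the selected indexed edges in the source space, g : N' → N an injective map, and r : N' the root of T. Assume: (Φ_≅) for all n', i, n'_c, if childT n' i = some n'_c then sel (g n') i = some (g n'_c); (T is a tree) every m' ≠ r has a parent in T, and parents in T are unique; (Φ_CN) every node has at most one parent under sel; (Φ_RN) sel p i ≠ some (g r) for all p, i. Then g is an edge-preserving and edge-reflecting embedding: for all n', i, m', childT n' i = some m' if and only if sel (g n') i = some (g m'). Consequently the restriction of the selected edges to the image of g is exactly the image under g of the edges of T, so the tree selected in the source space on the matched nodes is isomorphic to T via g. -/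
/-- Correctness guarantee: under the hard constraints, `g` is an
edge-preserving and edge-reflecting embedding of the target tree `T` into
the source space, and the selected edges restricted to the image of `g` are
exactly the image under `g` of the edges of `T`; hence the selected tree on
the matched nodes is isomorphic to `T` via `g`. -/
theorem selected_tree_isomorphic {N N' : Type*}
    (childT : N' → ℕ → Option N') (sel : N → ℕ → Option N)
    (g : N' → N) (r : N')
    (hg : Function.Injective g)
    (hiso : ∀ (n' : N') (i : ℕ) (n'c : N'),
      childT n' i = some n'c → sel (g n') i = some (g n'c))
    (htree_parent : ∀ m' : N', m' ≠ r → ∃ (p : N') (i : ℕ), childT p i = some m')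
    (htree_uniq : ∀ (p q : N') (i j : ℕ) (m' : N'),
      childT p i = some m' → childT q j = some m' → p = q ∧ i = j)
    (hCN : ∀ (p q : N) (i j : ℕ) (m : N),
      sel p i = some m → sel q j = some m → p = q ∧ i = j)
    (hRN : ∀ (p : N) (i : ℕ), sel p i ≠ some (g r)) :
    (∀ (n' : N') (i : ℕ) (m' : N'),
      childT n' i = some m' ↔ sel (g n') i = some (g m')) ∧
    {e : N × ℕ × N |
        (∃ n' : N', e.1 = g n') ∧ (∃ m' : N', e.2.2 = g m') ∧
        sel e.1 e.2.1 = some e.2.2} =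
      {e : N × ℕ × N | ∃ (n' : N') (i : ℕ) (m' : N'),
        childT n' i = some m' ∧ e = (g n', i, g m')} := by
  have key : ∀ (n' : N') (i : ℕ) (m' : N'),
      childT n' i = some m' ↔ sel (g n') i = some (g m') := by
    intro n' i m'
    constructor
    · exact hiso n' i m'
    · intro hsel
      by_cases hm : m' = r
      · subst hm; exact absurd hsel (hRN (g n') i)
      · obtain ⟨p, j, hp⟩ := htree_parent m' hm
        have hsel' := hiso p j m' hp
        obtain ⟨hpq, hij⟩ := hCN (g n') (g p) i j (g m') hsel hsel'
        have := hg hpq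
        subst this; subst hij; exact hp
  refine ⟨key, ?_⟩
  ext ⟨a, i, b⟩
  simp only [Set.mem_setOf_eq]
  constructor
  · rintro ⟨⟨n', rfl⟩, ⟨m', rfl⟩, hsel⟩
    exact ⟨n', i, m', (key n' i m').mpr hsel, rfl⟩
  · rintro ⟨n', j, m', hc, heq⟩
    simp only [Prod.mk.injEq] at heq
    obtain ⟨rfl, rfl, rfl⟩ := heq
    exact ⟨⟨n', rfl⟩, ⟨m', rfl⟩, hiso _ _ _ hc⟩
end

section
/- Let V be a type and consider a state ρ = (S, F_N, F_E) with edge set S ⊆ V × ℕ × V, free-node set F_N ⊆ V and free-edge-slot set F_E ⊆ V × ℕ. Suppose (n_p, i, n) ∈ S, n ∉ F_N, (n_p, i) ∉ F_E, (n_p', j) ∈ F_E, (n_p', j, n) ∉ S, and (n_p, i) ≠ (n_p', j). Then: (1) the preconditions of dcon(n_p, e_i, n) hold in ρ; (2) in the post-state of dcon(n_p, e_i, n), the preconditions of con(n_p', e_j, n) hold; and (3) executing dcon(n_p, e_i, n) followed by con(n_p', e_j, n) yields exactly the state ((S \ {(n_p, i, n)}) ∪ {(n_p', j, n)}, F_N,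 (F_E ∪ {(n_p, i)}) \ {(n_p', j)}). Hence the big-step semantics of the high-level action Mov(n, n_p, e_i, n_p', e_j) is realized by this composition of low-level actions without changing the edit effect. -/
/-- A state of the operational semantics of edit scripts: the current edge
set of the source space, the set of free nodes, and the set of free edge
slots. -/
structure EditState (V : Type*) where
  S : Set (V × ℕ × V)
  FN : Set V
  FE : Set (V × ℕ)

variable {V : Type*}

/-- Precondition of the low-level action `dcon(n_p, e_i, n)`. -/
def dconPre (ρ : EditState V) (np : V) (i : ℕ) (n : V) : Prop :=
  n ∉ ρ.FN ∧ (np, i) ∉ ρ.FE ∧ (np, i, n) ∈ ρ.S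

/-- Post-state of the low-level action `dcon(n_p, e_i, n)`. -/
def dconPost (ρ : EditState V) (np : V) (i : ℕ) (n : V) : EditState V :=
  ⟨ρ.S \ {(np, i, n)}, ρ.FN ∪ {n}, ρ.FE ∪ {(np, i)}⟩

/-- Precondition of the low-level action `con(n_p, e_i, n)`. -/
def conPre (ρ : EditState V) (np : V) (i : ℕ) (n : V) : Prop :=
  n ∈ ρ.FN ∧ (np, i) ∈ ρ.FE ∧ (np, i, n) ∉ ρ.S

/-- Post-state of the low-level action `con(n_p, e_i, n)`. -/
def conPost (ρ : EditState V) (np : V) (i : ℕ) (n : V) : EditState V :=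
  ⟨ρ.S ∪ {(np, i, n)}, ρ.FN \ {n}, ρ.FE \ {(np, i)}⟩

/-- The high-level action `Mov(n, n_p, e_i, n_p', e_j)` is realized by
`dcon(n_p, e_i, n)` followed by `con(n_p', e_j, n)`: both preconditions hold
along the way, and the resulting state moves the edge of `n` from `(n_p, e_i)`
to `(n_p', e_j)` while leaving the free-node set unchanged. -/
theorem mov_realized (S : Set (V × ℕ × V)) (FN : Set V) (FE : Set (V × ℕ))
    (np n np' : V) (i j : ℕ)
    (hS : (np, i, n) ∈ S) (hn : n ∉ FN) (hnpi : (np, i) ∉ FE)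
    (hnpj : (np', j) ∈ FE) (hS' : (np', j, n) ∉ S)
    (hne : (np, i) ≠ (np', j)) :
    dconPre ⟨S, FN, FE⟩ np i n ∧
    conPre (dconPost ⟨S, FN, FE⟩ np i n) np' j n ∧
    conPost (dconPost ⟨S, FN, FE⟩ np i n) np' j n =
      ⟨(S \ {(np, i, n)}) ∪ {(np', j, n)}, FN,
        (FE ∪ {(np, i)}) \ {(np', j)}⟩ := by
  refine ⟨⟨hn, hnpi, hS⟩, ⟨Or.inr rfl, Or.inl hnpj,
    fun h => hS' h.1⟩, ?_⟩
  simp only [conPost, dconPost]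
  congr 1
  · ext x
    simp only [Set.mem_diff, Set.mem_union, Set.mem_singleton_iff]
    constructor
    · rintro ⟨h1 | rfl, h2⟩
      · exact h1
      · exact absurd rfl h2
    · intro h; exact ⟨Or.inl h, fun e => hn (e ▸ h)⟩
end
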